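/- The edge tensor produced by t_edg = arange(Q) ⊗_{c_scr} t_brf (RepeatBlocks of the identity index list with block sizes c_scr and repeats t_brf) correctly encodes FGT parentage: the k-th output entry equals the FGT index of the parent (g, s) such that k corresponds to the pairing of the j-th child action of GT node g with its s-th inherited score, when children of each parent are enumerated action-major. -/

import Mathlib

open Finset

lemma getD_flatMap {α : Type*} (f : α → List ℕ) :
    ∀ (l : List α) (i p : ℕ) (hi : i < l.length),
      p < (f (l.get ⟨i, hi⟩)).length →
      (l.flatMap f).getD (((l.take i).map (fun a => (f a).length)).sum + p) 0
        = (f (l.get ⟨i, hi⟩)).getD p 0 := by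
  intro l
  induction l with
  | nil => intro i p hi; simp at hi
  | cons a t ih =>
    intro i p hi hp
    cases i with
    | zero =>
      simp only [List.take_zero, List.map_nil, List.sum_nil, Nat.zero_add,
        List.flatMap_cons, List.get]
      exact List.getD_append _ _ _ _ (by simpa using hp)
    | succ i =>
      simp only [List.take_succ_cons, List.map_cons, List.sum_cons,
        List.flatMap_cons, List.get]
      rw [Nat.add_assoc, List.getD_append_right _ _ _ _ (Nat.le_add_right _ _),
        Nat.add_sub_cancel_left]
      exact ih i p (by simpa using hi) hp

lemma sum_take_finRange (n : ℕ) (h : Fin n → ℕ) (g : Fin n) :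
    (((List.finRange n).take g.val).map h).sum
      = ∑ g' ∈ Finset.univ.filter (fun g' => g' < g), h g' := by
  set f : ℕ → ℕ := fun i => if hi : i < n then h ⟨i, hi⟩ else 0 with hf
  have hlist : ((List.finRange n).take g.val).map h = (List.range g.val).map f := by
    apply List.ext_getElem
    · simp [Nat.min_eq_left g.isLt.le]
    · intro i h1 h2
      simp only [List.getElem_map, List.getElem_take, List.getElem_finRange,
        List.getElem_range]
      have hi : i < n := by
        simp [Nat.min_eq_left g.isLt.le] at h1
        exact h1.trans g.isLt
      simp [hf, hi]
  rw [hlist, show ((List.range g.val).map f).sum = ∑ i ∈ Finset.range g.val, f i from rfl]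
  refine (Finset.sum_bij' (fun (a : Fin n) _ => a.val)
    (fun i hi => (⟨i, (Finset.mem_range.mp hi).trans g.isLt⟩ : Fin n)) ?_ ?_ ?_ ?_ ?_).symm
  · intro a ha; simp at ha ⊢; exact ha
  · intro i hi; simp at hi ⊢; exact hi
  · intro a ha; rfl
  · intro i hi; rfl
  · intro a ha; simp at ha; simp [hf, a.isLt]

theorem stmt_10 (n : ℕ) (cscr brf : Fin n → ℕ) :
    let offset : Fin n → ℕ := fun g => ∑ g' ∈ Finset.univ.filter (fun g' => g' < g), cscr g'
    let tedg : List ℕ :=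
      (List.finRange n).flatMap (fun g =>
        (List.range (brf g)).flatMap (fun _ =>
          (List.range (cscr g)).map (fun s => offset g + s)))
    tedg.length = (∑ g, cscr g * brf g) ∧
      ∀ (g : Fin n) (j s : ℕ), j < brf g → s < cscr g →
        tedg.getD
          ((∑ g' ∈ Finset.univ.filter (fun g' => g' < g), cscr g' * brf g')
            + j * cscr g + s) 0
          = offset g + s := by
  intro offset tedg
  set F : Fin n → List ℕ := fun g =>
    (List.range (brf g)).flatMap (fun _ =>
      (List.range (cscr g)).map (fun s => offset g + s)) with hF
  have hlen : ∀ a : Fin n, (F a).length = cscr a * brf a := by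
    intro a
    simp [hF, List.length_flatMap, Function.comp_def, List.map_const', List.sum_replicate,
      smul_eq_mul, mul_comm]
  constructor
  · show ((List.finRange n).flatMap F).length = _
    rw [List.length_flatMap,
      show List.map (fun a => (F a).length) (List.finRange n)
          = List.map (fun a => cscr a * brf a) (List.finRange n) from
        List.map_congr_left (fun a _ => hlen a),
      Fin.sum_univ_def]
  · intro g j s hj hs
    have hg : (g : ℕ) < (List.finRange n).length := by simp
    have hget : (List.finRange n).get ⟨g.val, hg⟩ = g := by simp
    have hp : j * cscr g + s < (F ((List.finRange n).get ⟨g.val, hg⟩)).length := by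
      rw [hget, hlen]
      calc j * cscr g + s < j * cscr g + cscr g := by omega
        _ = (j+1) * cscr g := by ring
        _ ≤ brf g * cscr g := Nat.mul_le_mul_right _ hj
        _ = cscr g * brf g := mul_comm _ _
    have hS : (∑ g' ∈ Finset.univ.filter (fun g' => g' < g), cscr g' * brf g')
        = (((List.finRange n).take g.val).map (fun a => (F a).length)).sum := by
      rw [sum_take_finRange n (fun a => (F a).length) g]
      exact Finset.sum_congr rfl (fun a _ => (hlen a).symm)
    rw [hS, Nat.add_assoc, getD_flatMap F (List.finRange n) g.val (j * cscr g + s) hg hp, hget]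
    -- now inner: (F g).getD (j * cscr g + s) 0 = offset g + s
    have hj' : j < (List.range (brf g)).length := by simpa using hj
    have hp2 : s < ((fun _ : ℕ => (List.range (cscr g)).map (fun s => offset g + s))
        ((List.range (brf g)).get ⟨j, hj'⟩)).length := by simpa using hs
    have htake : (((List.range (brf g)).take j).map
        (fun _ => ((List.range (cscr g)).map (fun s => offset g + s)).length)).sum
        = j * cscr g := by
      simp [List.map_const', List.sum_replicate, Nat.min_eq_left hj.le, mul_comm]
    rw [hF]
    rw [show j * cscr g + s
        = (((List.range (brf g)).take j).map
            (fun a => ((fun _ : ℕ => (List.range (cscr g)).map (fun s => offset g + s)) a).length)).sum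
          + s from by rw [htake]]
    rw [getD_flatMap _ (List.range (brf g)) j s hj' hp2]
    simp [List.getElem?_range hs]
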